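/- The quotient of the 2-torus S¹ × S¹ by the diagonal ℤ/2-action of simultaneous complex conjugation is homeomorphic to the 2-sphere S². -/

import Mathlib

/-- the n-torus, the product of n copies of the unit circle in ℂ -/
def Torus (n : ℕ) : Type := Fin n → Circle

noncomputable instance (n : ℕ) : TopologicalSpace (Torus n) := by unfold Torus; infer_instance

/-- simultaneous complex conjugation on the torus (on the unit circle,
complex conjugation coincides with inversion) -/
noncomputable def torusConj {n : ℕ} (x : Torus n) : Torus n := fun i => (x i)⁻¹

/-- the quotient of the n-torus by the diagonal conjugation action of ℤ/2 -/
def TorusQuot (n : ℕ) : Type := Quot (fun a b : Torus n => torusConj a = b)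

noncomputable instance (n : ℕ) : TopologicalSpace (TorusQuot n) := by unfold TorusQuot; infer_instance

namespace TQPf

open Complex Real

/- basic circle facts -/
lemma circ_sq (z : Circle) : (z : ℂ).re ^ 2 + (z : ℂ).im ^ 2 = 1 := by
  have h := Circle.normSq_coe z
  rw [Complex.normSq_apply] at h
  nlinarith [h]

lemma circ_re_sq_le (z : Circle) : (z : ℂ).re ^ 2 ≤ 1 := by
  nlinarith [circ_sq z, sq_nonneg (z : ℂ).im]

lemma inv_re (z : Circle) : ((z⁻¹ : Circle) : ℂ).re = (z : ℂ).re := by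
  rw [Circle.coe_inv_eq_conj]; simp

lemma inv_im (z : Circle) : ((z⁻¹ : Circle) : ℂ).im = -(z : ℂ).im := by
  rw [Circle.coe_inv_eq_conj]; simp

lemma circ_im_zero_inv (z : Circle) (h : (z : ℂ).im = 0) : z⁻¹ = z := by
  ext
  rw [Circle.coe_inv_eq_conj]
  apply Complex.ext <;> simp [h]

lemma circ_cases (z w : Circle) (h : (w : ℂ).re = (z : ℂ).re) : w = z ∨ w = z⁻¹ := by
  have h1 := circ_sq z
  have h2 := circ_sq w
  have him : (w : ℂ).im = (z : ℂ).im ∨ (w : ℂ).im = -(z : ℂ).im := by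
    have hre : (w : ℂ).re ^ 2 = (z : ℂ).re ^ 2 := by rw [h]
    have : (w : ℂ).im ^ 2 = (z : ℂ).im ^ 2 := by linarith
    rcases sq_eq_sq_iff_eq_or_eq_neg.mp this with h' | h'
    · exact Or.inl h'
    · exact Or.inr h'
  rcases him with h' | h'
  · left; ext; exact Complex.ext h h'
  · right; ext
    rw [Circle.coe_inv_eq_conj]
    exact Complex.ext (by simpa using h) (by simpa using h')

/- the invariant vector map -/
noncomputable def tvec (x : Torus 2) : EuclideanSpace ℝ (Fin 3) :=
  (WithLp.equiv 2 (Fin 3 → ℝ)).symm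
    ![(x 0 : ℂ).re, (x 1 : ℂ).re, (x 0 : ℂ).im * (x 1 : ℂ).im]

lemma tvec_apply0 (x : Torus 2) : tvec x 0 = (x 0 : ℂ).re := rfl
lemma tvec_apply1 (x : Torus 2) : tvec x 1 = (x 1 : ℂ).re := rfl
lemma tvec_apply2 (x : Torus 2) : tvec x 2 = (x 0 : ℂ).im * (x 1 : ℂ).im := rfl

lemma tvec_rel (x : Torus 2) :
    (tvec x 2) ^ 2 = (1 - (tvec x 0) ^ 2) * (1 - (tvec x 1) ^ 2) := by
  rw [tvec_apply0, tvec_apply1, tvec_apply2]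
  have h0 := circ_sq (x 0)
  have h1 := circ_sq (x 1)
  nlinarith [h0, h1]

lemma norm_tvec_sq (x : Torus 2) :
    ‖tvec x‖ ^ 2 = (tvec x 0) ^ 2 + (tvec x 1) ^ 2 + (tvec x 2) ^ 2 := by
  rw [EuclideanSpace.norm_eq]
  rw [Real.sq_sqrt (by positivity)]
  rw [Fin.sum_univ_three]
  simp [Real.norm_eq_abs, sq_abs]

lemma norm_tvec_pos (x : Torus 2) : 0 < ‖tvec x‖ := by
  have h := norm_tvec_sq x
  have hr := tvec_rel x
  have h0 := circ_re_sq_le (x 0)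
  have h1 := circ_re_sq_le (x 1)
  rw [tvec_apply0] at *
  nlinarith [norm_nonneg (tvec x), sq_nonneg (tvec x 0), sq_nonneg (tvec x 1),
    sq_nonneg ((tvec x 0) * (tvec x 1))]

/- the map to the sphere -/
noncomputable def gmap (x : Torus 2) : Metric.sphere (0 : EuclideanSpace ℝ (Fin 3)) 1 :=
  ⟨‖tvec x‖⁻¹ • tvec x, by
    rw [mem_sphere_zero_iff_norm]
    exact norm_smul_inv_norm (norm_pos_iff.mp (norm_tvec_pos x))⟩

lemma tvec_conj (x : Torus 2) : tvec (torusConj x) = tvec x := by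
  have e0 : torusConj x 0 = (x 0)⁻¹ := rfl
  have e1 : torusConj x 1 = (x 1)⁻¹ := rfl
  unfold tvec
  rw [e0, e1, inv_re, inv_re, inv_im, inv_im]
  ring_nf

lemma gmap_conj (x : Torus 2) : gmap (torusConj x) = gmap x := by
  unfold gmap
  simp only [tvec_conj]

/- uniqueness of the intersection of a ray with the pillowcase surface -/
lemma ray_unique {a b c a' b' c' t : ℝ} (ht : 0 < t)
    (ha : a ^ 2 ≤ 1) (hb : b ^ 2 ≤ 1) (ha' : a' ^ 2 ≤ 1) (hb' : b' ^ 2 ≤ 1)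
    (h1 : c ^ 2 = (1 - a ^ 2) * (1 - b ^ 2))
    (h2 : c' ^ 2 = (1 - a' ^ 2) * (1 - b' ^ 2))
    (e1 : a = t * a') (e2 : b = t * b') (e3 : c = t * c') : t = 1 := by
  subst e1 e2 e3
  have key : (1 - t ^ 2) * (1 - a' ^ 2 * b' ^ 2 * t ^ 2) = 0 := by
    linear_combination t ^ 2 * h2 - h1
  rcases mul_eq_zero.mp key with h | h
  · nlinarith
  · -- a'^2 * b'^2 * t^2 = 1
    have ht2 : t ^ 2 = 1 := by nlinarith
    nlinarith

lemma gmap_inj {x y : Torus 2} (h : gmap x = gmap y) : x = y ∨ torusConj x = y := by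
  have hx := norm_tvec_pos x
  have hy := norm_tvec_pos y
  have hv : ‖tvec x‖⁻¹ • tvec x = ‖tvec y‖⁻¹ • tvec y := congrArg Subtype.val h
  have happ : ∀ i : Fin 3, ‖tvec x‖⁻¹ * tvec x i = ‖tvec y‖⁻¹ * tvec y i := by
    intro i
    have := congrFun (congrArg (WithLp.equiv 2 (Fin 3 → ℝ)) hv) i
    simpa using this
  set t : ℝ := ‖tvec x‖ / ‖tvec y‖ with hts
  have htpos : 0 < t := div_pos hx hy
  have key : ∀ i : Fin 3, tvec x i = t * tvec y i := by
    intro i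
    have := happ i
    field_simp [hts] at this ⊢
    rw [hts]; field_simp; linarith [this]
  have ht1 : t = 1 := by
    refine ray_unique htpos ?_ ?_ ?_ ?_ (tvec_rel x) (tvec_rel y)
      (key 0) (key 1) (key 2)
    · rw [tvec_apply0]; exact circ_re_sq_le _
    · rw [tvec_apply1]; exact circ_re_sq_le _
    · rw [tvec_apply0]; exact circ_re_sq_le _
    · rw [tvec_apply1]; exact circ_re_sq_le _
  have k0 : (x 0 : ℂ).re = (y 0 : ℂ).re := by
    have := key 0; rw [ht1, one_mul] at this
    rw [tvec_apply0, tvec_apply0] at this; exact this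
  have k1 : (x 1 : ℂ).re = (y 1 : ℂ).re := by
    have := key 1; rw [ht1, one_mul] at this
    rw [tvec_apply1, tvec_apply1] at this; exact this
  have k2 : (x 0 : ℂ).im * (x 1 : ℂ).im = (y 0 : ℂ).im * (y 1 : ℂ).im := by
    have := key 2; rw [ht1, one_mul] at this
    rw [tvec_apply2, tvec_apply2] at this; exact this
  have funeq : ∀ (u v : Torus 2), u 0 = v 0 → u 1 = v 1 → u = v := by
    intro u v h0 h1
    funext i
    fin_cases i
    · exact h0
    · exact h1
  have hcx : torusConj x 0 = (x 0)⁻¹ := rfl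
  have hcy : torusConj x 1 = (x 1)⁻¹ := rfl
  rcases circ_cases (x 0) (y 0) k0.symm with c0 | c0 <;>
    rcases circ_cases (x 1) (y 1) k1.symm with c1 | c1
  · left; exact funeq x y c0.symm c1.symm
  · -- y 0 = x 0, y 1 = (x 1)⁻¹
    have him : (y 1 : ℂ).im = -(x 1 : ℂ).im := by rw [c1, inv_im]
    have : (x 0 : ℂ).im * (x 1 : ℂ).im = 0 := by
      rw [c0] at k2; rw [him] at k2; nlinarith [k2]
    rcases mul_eq_zero.mp this with hz | hz
    · right
      refine funeq _ _ ?_ ?_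
      · rw [hcx, circ_im_zero_inv _ hz, c0]
      · rw [hcy, c1]
    · left
      refine funeq x y ?_ ?_
      · exact c0.symm
      · rw [c1, circ_im_zero_inv _ hz]
  · -- y 0 = (x 0)⁻¹, y 1 = x 1
    have him : (y 0 : ℂ).im = -(x 0 : ℂ).im := by rw [c0, inv_im]
    have : (x 0 : ℂ).im * (x 1 : ℂ).im = 0 := by
      rw [c1] at k2; rw [him] at k2; nlinarith [k2]
    rcases mul_eq_zero.mp this with hz | hz
    · left
      refine funeq x y ?_ ?_
      · rw [c0, circ_im_zero_inv _ hz]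
      · exact c1.symm
    · right
      refine funeq _ _ ?_ ?_
      · rw [hcx, c0]
      · rw [hcy, circ_im_zero_inv _ hz, c1]
  · right
    refine funeq _ _ ?_ ?_
    · rw [hcx, c0]
    · rw [hcy, c1]

/- surjectivity: scaling factor -/
lemma exists_s {p0 p1 p2 : ℝ} (h : p0 ^ 2 + p1 ^ 2 + p2 ^ 2 = 1) :
    ∃ s : ℝ, 0 < s ∧ s * p0 ^ 2 ≤ 1 ∧ s * p1 ^ 2 ≤ 1 ∧
      s * p2 ^ 2 = (1 - s * p0 ^ 2) * (1 - s * p1 ^ 2) := by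
  have h4 : 4 * (p0 ^ 2 * p1 ^ 2) ≤ 1 := by
    nlinarith [sq_nonneg (p0 ^ 2 - p1 ^ 2), sq_nonneg p2, sq_nonneg (p0 ^ 2 + p1 ^ 2)]
  set d : ℝ := Real.sqrt (1 - 4 * (p0 ^ 2 * p1 ^ 2)) with hds
  have hd0 : 0 ≤ d := Real.sqrt_nonneg _
  have hd : d ^ 2 = 1 - 4 * (p0 ^ 2 * p1 ^ 2) := Real.sq_sqrt (by linarith)
  have hden : (0:ℝ) < 1 + d := by linarith
  refine ⟨2 / (1 + d), by positivity, ?_, ?_, ?_⟩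
  · rw [div_mul_eq_mul_div, div_le_one hden]
    nlinarith [sq_nonneg (p0 * p2), sq_nonneg (d - (2 * p0 ^ 2 - 1)), sq_nonneg (d + (2 * p0 ^ 2 - 1))]
  · rw [div_mul_eq_mul_div, div_le_one hden]
    nlinarith [sq_nonneg (p1 * p2), sq_nonneg (d - (2 * p1 ^ 2 - 1)), sq_nonneg (d + (2 * p1 ^ 2 - 1))]
  · have hp2 : p2 ^ 2 = 1 - p0 ^ 2 - p1 ^ 2 := by linarith
    field_simp
    nlinarith [hd, hp2]

lemma circle_exp_re (t : ℝ) : (Circle.exp t : ℂ).re = Real.cos t := by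
  rw [Circle.coe_exp]
  exact_mod_cast Complex.exp_ofReal_mul_I_re t

lemma circle_exp_im (t : ℝ) : (Circle.exp t : ℂ).im = Real.sin t := by
  rw [Circle.coe_exp]
  exact_mod_cast Complex.exp_ofReal_mul_I_im t

/- construct a torus point with prescribed invariants -/
lemma exists_torus_pt {a b c : ℝ} (ha : a ^ 2 ≤ 1) (hb : b ^ 2 ≤ 1)
    (hc : c ^ 2 = (1 - a ^ 2) * (1 - b ^ 2)) :
    ∃ x : Torus 2, (x 0 : ℂ).re = a ∧ (x 1 : ℂ).re = b ∧
      (x 0 : ℂ).im * (x 1 : ℂ).im = c := by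
  have ha' : -1 ≤ a ∧ a ≤ 1 := abs_le.mp (abs_le_one_iff_mul_self_le_one.mpr (by nlinarith))
  have hb' : -1 ≤ b ∧ b ≤ 1 := abs_le.mp (abs_le_one_iff_mul_self_le_one.mpr (by nlinarith))
  set ε : ℝ := if 0 ≤ c then 1 else -1 with hε
  refine ⟨(show (Fin 2 → Circle) from ![Circle.exp (Real.arccos a), Circle.exp (ε * Real.arccos b)]), ?_, ?_, ?_⟩
  · show (Circle.exp (Real.arccos a) : ℂ).re = a
    rw [circle_exp_re, Real.cos_arccos ha'.1 ha'.2]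
  · show (Circle.exp (ε * Real.arccos b) : ℂ).re = b
    rw [circle_exp_re]
    rcases le_or_gt 0 c with h | h
    · rw [hε, if_pos h, one_mul, Real.cos_arccos hb'.1 hb'.2]
    · rw [hε, if_neg (not_le.mpr h), neg_one_mul, Real.cos_neg,
        Real.cos_arccos hb'.1 hb'.2]
  · show (Circle.exp (Real.arccos a) : ℂ).im * (Circle.exp (ε * Real.arccos b) : ℂ).im = c
    rw [circle_exp_im, circle_exp_im, Real.sin_arccos]
    have habs : Real.sqrt (1 - a ^ 2) * Real.sqrt (1 - b ^ 2) = |c| := by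
      rw [← Real.sqrt_mul (by nlinarith), ← hc, Real.sqrt_sq_eq_abs]
    rcases le_or_gt 0 c with h | h
    · rw [hε, if_pos h, one_mul, Real.sin_arccos]
      rw [habs, _root_.abs_of_nonneg h]
    · rw [hε, if_neg (not_le.mpr h), neg_one_mul, Real.sin_neg, Real.sin_arccos]
      rw [mul_neg, habs, _root_.abs_of_neg h]
      ring

lemma gmap_surj : Function.Surjective gmap := by
  rintro ⟨p, hp⟩
  rw [mem_sphere_zero_iff_norm] at hp
  have hpsum : p 0 ^ 2 + p 1 ^ 2 + p 2 ^ 2 = 1 := by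
    rw [EuclideanSpace.norm_eq, Real.sqrt_eq_one, Fin.sum_univ_three] at hp
    simpa [Real.norm_eq_abs, sq_abs] using hp
  obtain ⟨s, hs, h0, h1, heq⟩ := exists_s hpsum
  set r : ℝ := Real.sqrt s with hrs
  have hr : 0 < r := Real.sqrt_pos.mpr hs
  have hr2 : r ^ 2 = s := Real.sq_sqrt hs.le
  have ha : (r * p 0) ^ 2 ≤ 1 := by rw [mul_pow, hr2]; exact h0
  have hb : (r * p 1) ^ 2 ≤ 1 := by rw [mul_pow, hr2]; exact h1
  have hc : (r * p 2) ^ 2 = (1 - (r * p 0) ^ 2) * (1 - (r * p 1) ^ 2) := by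
    rw [mul_pow, mul_pow, mul_pow, hr2]; exact heq
  obtain ⟨x, hx0, hx1, hx2⟩ := exists_torus_pt ha hb hc
  refine ⟨x, ?_⟩
  have htv : tvec x = r • (⟨p, by rwa [mem_sphere_zero_iff_norm]⟩ : Metric.sphere (0 : EuclideanSpace ℝ (Fin 3)) 1).val := by
    ext i
    fin_cases i
    · show tvec x 0 = r * p 0
      rw [tvec_apply0, hx0]
    · show tvec x 1 = r * p 1
      rw [tvec_apply1, hx1]
    · show tvec x 2 = r * p 2
      rw [tvec_apply2, hx2]
  have hnorm : ‖tvec x‖ = r := by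
    rw [htv, norm_smul, hp, Real.norm_eq_abs, abs_of_pos hr, mul_one]
  apply Subtype.ext
  show ‖tvec x‖⁻¹ • tvec x = p
  rw [hnorm, htv, smul_smul, inv_mul_cancel₀ hr.ne', one_smul]

/- continuity -/
lemma cont_tvec : Continuous tvec := by
  apply (PiLp.continuous_toLp 2 (fun _ : Fin 3 => ℝ)).comp
  refine continuous_pi fun i => ?_
  have hcoe0 : Continuous fun x : Torus 2 => ((x 0 : ℂ)) :=
    continuous_subtype_val.comp (continuous_apply (0 : Fin 2))
  have hcoe1 : Continuous fun x : Torus 2 => ((x 1 : ℂ)) :=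
    continuous_subtype_val.comp (continuous_apply (1 : Fin 2))
  fin_cases i
  · exact Complex.continuous_re.comp hcoe0
  · exact Complex.continuous_re.comp hcoe1
  · exact ((Complex.continuous_im.comp hcoe0).mul (Complex.continuous_im.comp hcoe1))

lemma cont_gmap : Continuous gmap := by
  apply Continuous.subtype_mk
  exact ((cont_tvec.norm.inv₀ fun x => (norm_tvec_pos x).ne').smul cont_tvec)

noncomputable def gbar : TorusQuot 2 → Metric.sphere (0 : EuclideanSpace ℝ (Fin 3)) 1 :=
  Quot.lift gmap (fun a b hab => by rw [← hab, gmap_conj])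

lemma cont_gbar : Continuous gbar := by
  exact continuous_quot_lift _ cont_gmap

lemma gbar_bij : Function.Bijective gbar := by
  constructor
  · rintro ⟨x⟩ ⟨y⟩ h
    have h' : gmap x = gmap y := h
    rcases gmap_inj h' with h'' | h''
    · rw [h'']
    · exact Quot.sound h''
  · intro p
    obtain ⟨x, hx⟩ := gmap_surj p
    exact ⟨Quot.mk _ x, hx⟩

instance : CompactSpace (Torus 2) := by unfold Torus; infer_instance

instance : CompactSpace (TorusQuot 2) := by
  constructor
  have : Set.range (Quot.mk fun a b : Torus 2 => torusConj a = b) = Set.univ :=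
    Set.range_eq_univ.mpr (fun q => Quot.exists_rep q)
  show IsCompact (Set.univ : Set (Quot fun a b : Torus 2 => torusConj a = b))
  rw [← this]
  exact isCompact_range continuous_quot_mk

end TQPf

/-- the quotient of the 2-torus S¹ × S¹ by the diagonal ℤ/2-action
of simultaneous complex conjugation is homeomorphic to the 2-sphere. -/
theorem torusQuot_two_homeo_sphere :
    Nonempty (TorusQuot 2 ≃ₜ Metric.sphere (0 : EuclideanSpace ℝ (Fin 3)) 1) := by
  exact ⟨Continuous.homeoOfEquivCompactToT2
    (f := Equiv.ofBijective _ TQPf.gbar_bij) TQPf.cont_gbar⟩
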